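/- The map p : Aut(X*) → (ℤ/2ℤ)^ℕ, where p(g)_n is the number of words v of length n at which g is active, taken modulo 2, is a group homomorphism, and it is continuous when Aut(X*) carries the topology of pointwise convergence and (ℤ/2ℤ)^ℕ the product topology of the discrete topologies. -/

import Mathlib

/-!  Common setup: the group `Aut(X*)` of automorphisms of the rooted binary tree,
the Grigorchuk generators `a, b_ω, c_ω, d_ω`, and the subgroups `G_ω`, `L_ω`. -/

/-- Finite words over `X = {0,1}`: vertices of the rooted binary tree. -/
abbrev Word := List Bool

/-- `Aut(X*)`: bijections of the set of words which preserve word length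
(hence fix the empty word) and preserve the prefix relation, as a subgroup of the
permutation group of `Word`. -/
def TreeAut : Subgroup (Equiv.Perm Word) where
  carrier := {g | (∀ w : Word, (g w).length = w.length) ∧
      ∀ u v : Word, u <+: v ↔ g u <+: g v}
  one_mem' := ⟨fun _ => rfl, fun _ _ => Iff.rfl⟩
  mul_mem' := by
    rintro g h ⟨hg1, hg2⟩ ⟨hh1, hh2⟩
    refine ⟨fun w => ?_, fun u v => ?_⟩
    · simpa using (hg1 (h w)).trans (hh1 w)
    · simpa using (hh2 u v).trans (hg2 (h u) (h v))
  inv_mem' := by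
    rintro g ⟨hg1, hg2⟩
    refine ⟨fun w => ?_, fun u v => ?_⟩
    · have := hg1 (g⁻¹ w)
      rw [show g (g⁻¹ w) = w from Equiv.apply_symm_apply g w] at this
      exact this.symm
    · have := (hg2 (g⁻¹ u) (g⁻¹ v)).symm
      simpa using this

/-- Application of a tree automorphism to a word. -/
def ap (g : ↥TreeAut) (w : Word) : Word := (g : Equiv.Perm Word) w

/-- The root permutation `a` (as a map): `a(0v) = 1v`, `a(1v) = 0v`. -/
def aFun : Word → Word
  | [] => []
  | x :: v => (!x) :: v

/-- The common recursive pattern of the maps `b_ω, c_ω, d_ω`: on `0v` act by the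
identity if `ω 0 = k` and by `a` otherwise, on `1v` recurse with the shifted sequence.
(`k = 2` gives `b`, `k = 1` gives `c`, `k = 0` gives `d`.) -/
def genFun (k : Fin 3) : (ℕ → Fin 3) → Word → Word
  | _, [] => []
  | ω, false :: v => false :: (if ω 0 = k then v else aFun v)
  | ω, true :: v => true :: genFun k (fun n => ω (n + 1)) v

lemma aFun_invol : Function.Involutive aFun := by
  intro w; cases w with
  | nil => rfl
  | cons x v => simp [aFun]

lemma aFun_length : ∀ w : Word, (aFun w).length = w.length := by
  intro w; cases w <;> simp [aFun]

lemma aFun_prefix : ∀ u v : Word, u <+: v → aFun u <+: aFun v := by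
  intro u v h
  cases u with
  | nil => simp [aFun]
  | cons x u' =>
    cases v with
    | nil => simp at h
    | cons y v' =>
      rw [List.cons_prefix_cons] at h
      obtain ⟨rfl, h2⟩ := h
      simpa [aFun, List.cons_prefix_cons] using h2

lemma genFun_length (k : Fin 3) : ∀ (w : Word) (ω : ℕ → Fin 3),
    (genFun k ω w).length = w.length
  | [], _ => rfl
  | false :: v, ω => by
    by_cases h : ω 0 = k <;> simp [genFun, h, aFun_length]
  | true :: v, ω => by
    simp [genFun, genFun_length k v]

lemma genFun_invol (k : Fin 3) : ∀ (w : Word) (ω : ℕ → Fin 3),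
    genFun k ω (genFun k ω w) = w
  | [], _ => rfl
  | false :: v, ω => by
    by_cases h : ω 0 = k <;> simp [genFun, h, aFun_invol v]
  | true :: v, ω => by
    simp [genFun, genFun_invol k v]

lemma genFun_prefix (k : Fin 3) : ∀ (u v : Word) (ω : ℕ → Fin 3),
    u <+: v → genFun k ω u <+: genFun k ω v
  | [], v, ω, _ => by simp [genFun]
  | x :: u', [], ω, h => by simp at h
  | x :: u', y :: v', ω, h => by
    rw [List.cons_prefix_cons] at h
    obtain ⟨rfl, h2⟩ := h
    cases x with
    | false =>
      by_cases h0 : ω 0 = k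
      · simpa [genFun, h0, List.cons_prefix_cons] using h2
      · simpa [genFun, h0, List.cons_prefix_cons] using aFun_prefix u' v' h2
    | true =>
      simpa [genFun, List.cons_prefix_cons] using genFun_prefix k u' v' _ h2

/-- Build an element of `Aut(X*)` from an involutive, length-preserving,
prefix-preserving map. -/
def mkAut (f : Word → Word) (hinv : Function.Involutive f)
    (hlen : ∀ w, (f w).length = w.length)
    (hpre : ∀ u v : Word, u <+: v → f u <+: f v) : ↥TreeAut :=
  ⟨hinv.toPerm, by
    refine ⟨fun w => ?_, fun u v => ⟨fun h => ?_, fun h => ?_⟩⟩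
    · simpa using hlen w
    · simpa using hpre u v h
    · have := hpre _ _ (by simpa using h)
      simpa [hinv u, hinv v] using this⟩

/-- The automorphism `a`. -/
def aAut : ↥TreeAut := mkAut aFun aFun_invol aFun_length aFun_prefix

/-- The automorphism `b_ω`. -/
def bAut (ω : ℕ → Fin 3) : ↥TreeAut :=
  mkAut (genFun 2 ω) (fun w => genFun_invol 2 w ω) (fun w => genFun_length 2 w ω)
    (fun u v h => genFun_prefix 2 u v ω h)

/-- The automorphism `c_ω`. -/
def cAut (ω : ℕ → Fin 3) : ↥TreeAut :=
  mkAut (genFun 1 ω) (fun w => genFun_invol 1 w ω) (fun w => genFun_length 1 w ω)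
    (fun u v h => genFun_prefix 1 u v ω h)

/-- The automorphism `d_ω`. -/
def dAut (ω : ℕ → Fin 3) : ↥TreeAut :=
  mkAut (genFun 0 ω) (fun w => genFun_invol 0 w ω) (fun w => genFun_length 0 w ω)
    (fun u v h => genFun_prefix 0 u v ω h)

/-- `G_ω = ⟨a, b_ω, c_ω, d_ω⟩`. -/
def Ggrp (ω : ℕ → Fin 3) : Subgroup ↥TreeAut :=
  Subgroup.closure {aAut, bAut ω, cAut ω, dAut ω}

/-- `L_ω = ⟨a b_ω, d_ω⟩`. -/
def Lgrp (ω : ℕ → Fin 3) : Subgroup ↥TreeAut :=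
  Subgroup.closure {aAut * bAut ω, dAut ω}

/-- The `n`-fold shift `σⁿω`. -/
def shift (n : ℕ) (ω : ℕ → Fin 3) : ℕ → Fin 3 := fun m => ω (m + n)

/-- `Ω_∞`: sequences in which each of `0, 1, 2` occurs infinitely often. -/
def OmegaInf : Set (ℕ → Fin 3) := {ω | ∀ k : Fin 3, ∀ N : ℕ, ∃ n, N ≤ n ∧ ω n = k}

/-- `g` fixes every word of length `n`. -/
def fixesLevel (g : ↥TreeAut) (n : ℕ) : Prop := ∀ w : Word, w.length = n → ap g w = w

/-- The subgroup of all tree automorphisms acting trivially outside the subtree `uX*`. -/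
def ristSubgroup (u : Word) : Subgroup ↥TreeAut where
  carrier := {g | ∀ w : Word, ¬ u <+: w → ap g w = w}
  one_mem' := by intro w _; rfl
  mul_mem' := by
    intro g h hg hh w hw
    have e1 : ap g w = w := hg w hw
    have e2 : ap h w = w := hh w hw
    simp only [ap] at e1 e2
    show (g : Equiv.Perm Word) ((h : Equiv.Perm Word) w) = w
    rw [e2, e1]
  inv_mem' := by
    intro g hg w hw
    have h1' : ap g w = w := hg w hw
    have h1 : (g : Equiv.Perm Word) w = w := h1'
    show ((g : Equiv.Perm Word))⁻¹ w = w
    conv_lhs => rw [← h1]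
    simp

/-- The subgroup of all tree automorphisms fixing every word of length `n`
(the `n`-th level stabilizer in `Aut(X*)`). -/
def levelStab (n : ℕ) : Subgroup ↥TreeAut where
  carrier := {g | fixesLevel g n}
  one_mem' := by intro w _; rfl
  mul_mem' := by
    intro g h hg hh w hw
    have e1 : ap g w = w := hg w hw
    have e2 : ap h w = w := hh w hw
    simp only [ap] at e1 e2
    show (g : Equiv.Perm Word) ((h : Equiv.Perm Word) w) = w
    rw [e2, e1]
  inv_mem' := by
    intro g hg w hw
    have h1' : ap g w = w := hg w hw
    have h1 : (g : Equiv.Perm Word) w = w := h1'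
    show ((g : Equiv.Perm Word))⁻¹ w = w
    conv_lhs => rw [← h1]
    simp

/-- The rigid level stabilizer `Rist_G(n)`: the subgroup generated by the rigid vertex
stabilizers `Rist_G(u) = G ⊓ ristSubgroup u` over all words `u` of length `n`. -/
def ristLevel (G : Subgroup ↥TreeAut) (n : ℕ) : Subgroup ↥TreeAut :=
  ⨆ u ∈ {u : Word | u.length = n}, G ⊓ ristSubgroup u

/-- `G` acts transitively on each level of the tree. -/
def LevelTransitive (G : Subgroup ↥TreeAut) : Prop :=
  ∀ u v : Word, u.length = v.length → ∃ g ∈ G, ap g u = v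

/-- A set of tree automorphisms acts level transitively on the subtree `vX*`. -/
def LevelTransitiveOn (S : Set ↥TreeAut) (v : Word) : Prop :=
  ∀ u₁ u₂ : Word, u₁.length = u₂.length → ∃ g ∈ S, ap g (v ++ u₁) = v ++ u₂

/-- `L_{n,ω}`: `L_{0,ω} = L_ω` and `L_{n,ω}` is generated by the squares of
elements of `L_{n-1,ω}`. -/
def Lsq (ω : ℕ → Fin 3) : ℕ → Subgroup ↥TreeAut
  | 0 => Lgrp ω
  | n + 1 => Subgroup.closure {x | ∃ y ∈ Lsq ω n, x = y * y}

/-- `g` is active at the word `v`: the section `g_v` acts nontrivially on the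
one-letter words. -/
def IsActive (g : ↥TreeAut) (v : Word) : Prop :=
  ap g (v ++ [false]) ≠ ap g v ++ [false]

open scoped Classical in
/-- `p(g)_n`: the number of words of length `n` at which `g` is active, mod 2
(words of length `n` are enumerated as `List.ofFn f` for `f : Fin n → Bool`). -/
noncomputable def pMap (g : ↥TreeAut) (n : ℕ) : ZMod 2 :=
  (((Finset.univ : Finset (Fin n → Bool)).filter
    (fun f => IsActive g (List.ofFn f))).card : ZMod 2)

/-! Topology: `Aut(X*)` with the topology of pointwise convergence. -/

instance : TopologicalSpace Word := ⊥
instance : DiscreteTopology Word := ⟨rfl⟩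
instance : TopologicalSpace (ZMod 2) := ⊥
instance : DiscreteTopology (ZMod 2) := ⟨rfl⟩

/-- The topology of pointwise convergence on permutations of the (discrete) set of
words. -/
instance : TopologicalSpace (Equiv.Perm Word) :=
  TopologicalSpace.induced (fun g : Equiv.Perm Word => (g : Word → Word)) inferInstance

lemma continuous_evalWord (w : Word) :
    Continuous fun g : Equiv.Perm Word => g w :=
  (continuous_apply w).comp continuous_induced_dom

lemma isOpen_evalWord (w y : Word) : IsOpen {g : Equiv.Perm Word | g w = y} :=
  (continuous_evalWord w).isOpen_preimage {y} (isOpen_discrete _)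

instance : IsTopologicalGroup (Equiv.Perm Word) where
  continuous_mul := by
    rw [continuous_induced_rng]
    apply continuous_pi
    intro w
    rw [continuous_discrete_rng]
    intro y
    have key : {p : Equiv.Perm Word × Equiv.Perm Word | p.1 (p.2 w) = y} =
        ⋃ z : Word, {g : Equiv.Perm Word | g z = y} ×ˢ {h : Equiv.Perm Word | h w = z} := by
      ext p
      simp only [Set.mem_iUnion, Set.mem_prod, Set.mem_setOf_eq]
      constructor
      · intro h; exact ⟨p.2 w, h, rfl⟩
      · rintro ⟨z, h1, h2⟩; simp [h2, h1]
    show IsOpen {p : Equiv.Perm Word × Equiv.Perm Word | p.1 (p.2 w) = y}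
    rw [key]
    exact isOpen_iUnion fun z => (isOpen_evalWord z y).prod (isOpen_evalWord w z)
  continuous_inv := by
    rw [continuous_induced_rng]
    apply continuous_pi
    intro w
    rw [continuous_discrete_rng]
    intro y
    have key : {g : Equiv.Perm Word | g⁻¹ w = y} = {g : Equiv.Perm Word | g y = w} := by
      ext g
      simp only [Set.mem_setOf_eq]
      constructor
      · intro h; rw [← h]; simp
      · intro h; rw [← h]; simp
    show IsOpen {g : Equiv.Perm Word | g⁻¹ w = y}
    rw [key]
    exact isOpen_evalWord y w



/-! ### Auxiliary lemmas for statement 10 -/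

instance (g : ↥TreeAut) (v : Word) : Decidable (IsActive g v) :=
  inferInstanceAs (Decidable (_ ≠ _))

lemma ap_length (g : ↥TreeAut) (w : Word) : (ap g w).length = w.length := g.2.1 w

lemma ap_prefix (g : ↥TreeAut) {u v : Word} (h : u <+: v) : ap g u <+: ap g v :=
  (g.2.2 u v).1 h

lemma ap_mul (g h : ↥TreeAut) (w : Word) : ap (g * h) w = ap g (ap h w) := rfl

lemma ap_inv_ap (g : ↥TreeAut) (w : Word) : ap g⁻¹ (ap g w) = w := by
  simp [ap]

lemma ap_ap_inv (g : ↥TreeAut) (w : Word) : ap g (ap g⁻¹ w) = w := by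
  simp [ap]

lemma ap_injective (g : ↥TreeAut) : Function.Injective (ap g) :=
  (g : Equiv.Perm Word).injective

lemma append_single_inj (l : Word) (a b : Bool) : l ++ [a] = l ++ [b] ↔ a = b := by
  constructor
  · intro h
    simpa using List.append_cancel_left h
  · rintro rfl; rfl

lemma ap_append_single (g : ↥TreeAut) (v : Word) (x : Bool) :
    ∃ y : Bool, ap g (v ++ [x]) = ap g v ++ [y] := by
  obtain ⟨t, ht⟩ := ap_prefix g (⟨[x], rfl⟩ : v <+: v ++ [x])
  have hlen : t.length = 1 := by
    have := ap_length g (v ++ [x])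
    rw [← ht] at this
    simpa [ap_length] using this
  obtain ⟨y, rfl⟩ := List.length_eq_one_iff.1 hlen
  exact ⟨y, ht.symm⟩

lemma ap_child (g : ↥TreeAut) (v : Word) (x : Bool) :
    ap g (v ++ [x]) = ap g v ++ [xor x (decide (IsActive g v))] := by
  obtain ⟨y0, h0⟩ := ap_append_single g v false
  obtain ⟨y1, h1⟩ := ap_append_single g v true
  have hne : y0 ≠ y1 := by
    intro h
    have : ap g (v ++ [false]) = ap g (v ++ [true]) := by rw [h0, h1, h]
    have := ap_injective g this
    simp at this
  have hiff : IsActive g v ↔ y0 = true := by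
    unfold IsActive
    rw [h0, ne_eq, append_single_inj]
    cases y0 <;> simp
  have hact : decide (IsActive g v) = y0 := by
    cases y0 <;> simp [hiff]
  cases x
  · rw [h0, hact]
    cases y0 <;> rfl
  · rw [h1, hact]
    cases y0 <;> cases y1 <;> simp_all

lemma isActive_mul (g h : ↥TreeAut) (v : Word) :
    IsActive (g * h) v ↔ Xor' (IsActive h v) (IsActive g (ap h v)) := by
  have key : ap (g * h) (v ++ [false]) =
      ap (g * h) v ++ [xor (decide (IsActive h v)) (decide (IsActive g (ap h v)))] := by
    rw [ap_mul, ap_child h v false, ap_child g (ap h v), ap_mul]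
    simp
  have step : IsActive (g * h) v ↔
      xor (decide (IsActive h v)) (decide (IsActive g (ap h v))) = true := by
    unfold IsActive
    rw [key, ne_eq, append_single_inj]
    exact Bool.ne_false_iff
  rw [step]
  by_cases h1 : IsActive h v <;> by_cases h2 : IsActive g (ap h v) <;>
    simp [h1, h2, Xor']

lemma card_filter_xor {α : Type*} [Fintype α] (p q : α → Prop)
    [DecidablePred p] [DecidablePred q] [inst : ∀ a, Decidable (Xor' (p a) (q a))] :
    (((Finset.univ : Finset α).filter (fun a => Xor' (p a) (q a))).card : ZMod 2) =
      ((Finset.univ.filter p).card : ZMod 2) + ((Finset.univ.filter q).card : ZMod 2) := by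
  rw [Finset.card_filter, Finset.card_filter, Finset.card_filter]
  push_cast
  rw [← Finset.sum_add_distrib]
  apply Finset.sum_congr rfl
  intro a _
  have h2 : (1 : ZMod 2) + 1 = 0 := by decide
  by_cases hp : p a <;> by_cases hq : q a <;>
    simp [Xor', hp, hq, h2]

/-- Turn a word of length `n` into a function `Fin n → Bool`. -/
def toFn (n : ℕ) (l : Word) (hl : l.length = n) : Fin n → Bool :=
  fun i => l.get (Fin.cast hl.symm i)

lemma ofFn_toFn (n : ℕ) (l : Word) (hl : l.length = n) :
    List.ofFn (toFn n l hl) = l := by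
  subst hl
  show List.ofFn (fun i => l.get (Fin.cast rfl i)) = l
  simp [List.ofFn_get]

lemma card_filter_comp (g h : ↥TreeAut) (n : ℕ) :
    ((Finset.univ : Finset (Fin n → Bool)).filter
        (fun f => IsActive g (ap h (List.ofFn f)))).card =
      ((Finset.univ : Finset (Fin n → Bool)).filter
        (fun f => IsActive g (List.ofFn f))).card := by
  have hlen : ∀ (k : ↥TreeAut) (f : Fin n → Bool), (ap k (List.ofFn f)).length = n := by
    intro k f; rw [ap_length]; simp
  apply Finset.card_bij' (fun f _ => toFn n (ap h (List.ofFn f)) (hlen h f))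
    (fun f _ => toFn n (ap h⁻¹ (List.ofFn f)) (hlen h⁻¹ f))
  · intro f hf
    simp only [Finset.mem_filter, Finset.mem_univ, true_and] at hf ⊢
    rwa [ofFn_toFn]
  · intro f hf
    simp only [Finset.mem_filter, Finset.mem_univ, true_and] at hf ⊢
    rwa [ofFn_toFn, ap_ap_inv]
  · intro f hf
    have : List.ofFn (toFn n (ap h⁻¹ (List.ofFn (toFn n (ap h (List.ofFn f)) (hlen h f))))
        (hlen h⁻¹ _)) = List.ofFn f := by
      rw [ofFn_toFn, ofFn_toFn, ap_inv_ap]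
    exact List.ofFn_injective this
  · intro f hf
    have : List.ofFn (toFn n (ap h (List.ofFn (toFn n (ap h⁻¹ (List.ofFn f)) (hlen h⁻¹ f))))
        (hlen h _)) = List.ofFn f := by
      rw [ofFn_toFn, ofFn_toFn, ap_ap_inv]
    exact List.ofFn_injective this

lemma pMap_spec (g : ↥TreeAut) (n : ℕ)
    [DecidablePred (fun f : Fin n → Bool => IsActive g (List.ofFn f))] :
    pMap g n = (((Finset.univ : Finset (Fin n → Bool)).filter
      (fun f => IsActive g (List.ofFn f))).card : ZMod 2) := by
  unfold pMap
  congr 1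
  apply congrArg
  exact @Finset.filter_congr _ _ _ (fun f => Classical.propDecidable _) _ _
    (fun _ _ => Iff.rfl)

lemma pMap_mul (g h : ↥TreeAut) : pMap (g * h) = pMap g + pMap h := by
  classical
  funext n
  show pMap (g * h) n = pMap g n + pMap h n
  rw [pMap_spec, pMap_spec, pMap_spec]
  have e1 : ((Finset.univ : Finset (Fin n → Bool)).filter
      (fun f => IsActive (g * h) (List.ofFn f))) =
      ((Finset.univ : Finset (Fin n → Bool)).filter
      (fun f => Xor' (IsActive h (List.ofFn f)) (IsActive g (ap h (List.ofFn f))))) :=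
    Finset.filter_congr fun f _ => isActive_mul g h (List.ofFn f)
  rw [e1, card_filter_xor, card_filter_comp g h n]
  ring

lemma pMap_eq (g : ↥TreeAut) (n : ℕ) (F1 F2 : (Fin n → Bool) → Word)
    (h1 : ∀ f, ap g (List.ofFn f) = F1 f)
    (h2 : ∀ f, ap g (List.ofFn f ++ [false]) = F2 f) :
    pMap g n = (((Finset.univ : Finset (Fin n → Bool)).filter
      (fun f => F2 f ≠ F1 f ++ [false])).card : ZMod 2) := by
  rw [pMap_spec]
  congr 1
  apply congrArg
  exact Finset.filter_congr fun f _ => by unfold IsActive; rw [h1 f, h2 f]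

lemma continuous_ap_eval (w : Word) :
    Continuous fun g : ↥TreeAut => ap g w :=
  (continuous_evalWord w).comp continuous_subtype_val

lemma isOpen_ap_eval (w y : Word) : IsOpen {g : ↥TreeAut | ap g w = y} :=
  (continuous_ap_eval w).isOpen_preimage {y} (isOpen_discrete _)

lemma pMap_continuous : Continuous (pMap : ↥TreeAut → ℕ → ZMod 2) := by
  classical
  apply continuous_pi
  intro n
  rw [continuous_discrete_rng]
  intro z
  have key : (fun g => pMap g n) ⁻¹' {z} =
      ⋃ (F : ((Fin n → Bool) → Word) × ((Fin n → Bool) → Word))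
        (_ : (((Finset.univ : Finset (Fin n → Bool)).filter
          (fun f => F.2 f ≠ F.1 f ++ [false])).card : ZMod 2) = z),
        ⋂ f : Fin n → Bool,
          ({g : ↥TreeAut | ap g (List.ofFn f) = F.1 f} ∩
           {g : ↥TreeAut | ap g (List.ofFn f ++ [false]) = F.2 f}) := by
    ext g
    simp only [Set.mem_preimage, Set.mem_singleton_iff, Set.mem_iUnion, Set.mem_iInter,
      Set.mem_inter_iff, Set.mem_setOf_eq]
    constructor
    · intro hz
      refine ⟨(fun f => ap g (List.ofFn f), fun f => ap g (List.ofFn f ++ [false])), ?_,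
        fun f => ⟨rfl, rfl⟩⟩
      rw [← hz]
      exact (pMap_eq g n _ _ (fun _ => rfl) (fun _ => rfl)).symm
    · rintro ⟨F, hF, hg⟩
      rw [← hF]
      exact pMap_eq g n F.1 F.2 (fun f => (hg f).1) (fun f => (hg f).2)
  rw [key]
  apply isOpen_iUnion
  intro F
  apply isOpen_iUnion
  intro _
  apply isOpen_iInter_of_finite
  intro f
  exact (isOpen_ap_eval _ _).inter (isOpen_ap_eval _ _)

/-- the map `p : Aut(X*) → (ℤ/2ℤ)^ℕ` counting (mod 2) the active words
on each level is a group homomorphism and is continuous for the topology of pointwise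
convergence on `Aut(X*)` and the product of discrete topologies on `(ℤ/2ℤ)^ℕ`. -/
theorem statement10 :
    (∀ g h : ↥TreeAut, pMap (g * h) = pMap g + pMap h) ∧
      Continuous (pMap : ↥TreeAut → ℕ → ZMod 2) := by
  exact ⟨pMap_mul, pMap_continuous⟩
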